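/- If φ(0) = 0 and there exists a matrix W ∈ M_n(ℝ) of rank 1 with φ(W) ≠ 0, then there exists an invertible matrix R ∈ M_n(ℝ) such that φ(E_{ij}) = R E_{ij} R^{−1} for all i, j = 1, 2, …, n. -/

import Mathlib

open Matrix in
/-- If `φ : M_n(ℝ) → M_n(ℝ)` is multiplicative, `φ(0) = 0`, and there exists a rank-one matrix
`W` with `φ(W) ≠ 0`, then there is an invertible matrix `R` with
`φ(E_{ij}) = R E_{ij} R⁻¹` for all `i, j`. -/
theorem stmt_3 (n : ℕ) (hn : 0 < n)
    (φ : Matrix (Fin n) (Fin n) ℝ → Matrix (Fin n) (Fin n) ℝ)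
    (hφ : ∀ A B : Matrix (Fin n) (Fin n) ℝ, φ (A * B) = φ A * φ B)
    (h0 : φ 0 = 0)
    (hW : ∃ W : Matrix (Fin n) (Fin n) ℝ, W.rank = 1 ∧ φ W ≠ 0) :
    ∃ R : Matrix (Fin n) (Fin n) ℝ, IsUnit R ∧
      ∀ i j : Fin n,
        φ (Matrix.single i j (1 : ℝ)) =
          R * Matrix.single i j (1 : ℝ) * R⁻¹ := by
  obtain ⟨W, hr, hWne⟩ := hW
  set F : Fin n → Fin n → Matrix (Fin n) (Fin n) ℝ :=
    fun i j => φ (Matrix.single i j (1 : ℝ)) with hF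
  -- matrix unit relations
  have hmul : ∀ i j l : Fin n, F i j * F j l = F i l := by
    intro i j l
    rw [hF, ← hφ]
    simp
  have hz : ∀ i j k l : Fin n, j ≠ k → F i j * F k l = 0 := by
    intro i j k l hjk
    rw [hF, ← hφ, Matrix.single_mul_single_of_ne (h := hjk), h0]
  -- rank-one factorization of W
  obtain ⟨u, c, huc⟩ : ∃ u c : Fin n → ℝ, ∀ a b, W a b = c b * u a := by
    rw [Matrix.rank] at hr
    obtain ⟨v, hv0, hv⟩ := finrank_eq_one_iff'.mp hr
    refine ⟨(v : Fin n → ℝ), fun b => (hv ⟨W *ᵥ Pi.single b 1,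
      LinearMap.mem_range.mpr ⟨Pi.single b 1, rfl⟩⟩).choose, fun a b => ?_⟩
    have h := (hv ⟨W *ᵥ Pi.single b 1, LinearMap.mem_range.mpr ⟨Pi.single b 1, rfl⟩⟩).choose_spec
    have h2 : (hv ⟨W *ᵥ Pi.single b 1, _⟩).choose • (v : Fin n → ℝ) = W *ᵥ Pi.single b 1 :=
      congrArg Subtype.val h
    have := congrFun h2 a
    simp [Matrix.mulVec_single] at this
    simpa using this.symm
  -- W ≠ 0, so some entry nonzero
  have hW0 : W ≠ 0 := fun h => hWne (by rw [h, h0])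
  obtain ⟨i₀, hrow⟩ := Function.ne_iff.mp hW0
  obtain ⟨j₀, hij⟩ := Function.ne_iff.mp hrow
  have hij : W i₀ j₀ ≠ 0 := by simpa using hij
  -- all F nonzero
  have hFne : ∀ a b : Fin n, F a b ≠ 0 := by
    intro a b hab
    -- all F are zero
    have hall : ∀ p q : Fin n, F p q = 0 := by
      intro p q
      have : F p q = F p a * F a b * F b q := by
        rw [mul_assoc, hmul, hmul]
      rw [this, hab, mul_zero, zero_mul]
    -- φ of d • E_{j₀ i₀} is zero
    set d : ℝ := (W i₀ j₀)⁻¹ with hd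
    have hphiS : φ (Matrix.single j₀ i₀ d) = 0 := by
      have : Matrix.single j₀ i₀ d =
          Matrix.single j₀ a (1 : ℝ) * Matrix.single a i₀ d := by
        rw [Matrix.single_mul_single_same, one_mul]
      have h1 : φ (Matrix.single j₀ a (1 : ℝ)) = 0 := hall j₀ a
      rw [this, hφ, h1, zero_mul]
    -- identity W = W * (d E_{j₀ i₀}) * W
    have hid : W * Matrix.single j₀ i₀ d * W = W := by
      ext x y
      rw [Matrix.mul_apply]
      have : ∀ q, (W * Matrix.single j₀ i₀ d) x q * W q y =
          if q = i₀ then (W x j₀ * d) * W i₀ y else 0 := by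
        intro q
        by_cases hq : q = i₀
        · subst hq; simp
        · rw [if_neg hq]; simp [hq]
      rw [Finset.sum_congr rfl (fun q _ => this q), Finset.sum_ite_eq' _ i₀]
      simp only [Finset.mem_univ, if_true]
      rw [huc x j₀, huc i₀ y, huc x y, hd]
      have h' : W i₀ j₀ = c j₀ * u i₀ := huc i₀ j₀
      have h2 := hij
      rw [h'] at h2
      obtain ⟨hc0, hu0⟩ := mul_ne_zero_iff.mp h2
      rw [h']
      field_simp
    apply hWne
    calc φ W = φ (W * Matrix.single j₀ i₀ d * W) := by rw [hid]
      _ = φ W * φ (Matrix.single j₀ i₀ d) * φ W := by rw [hφ, hφ]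
      _ = 0 := by rw [hphiS, mul_zero, zero_mul]
  -- construct v fixed by F 0 0
  set z : Fin n := ⟨0, hn⟩ with hzdef
  have hFz := hFne z z
  obtain ⟨a₁, ha1⟩ := Function.ne_iff.mp hFz
  obtain ⟨b₁, hb1⟩ := Function.ne_iff.mp ha1
  have hb1 : F z z a₁ b₁ ≠ 0 := by simpa using hb1
  set v : Fin n → ℝ := (F z z) *ᵥ Pi.single b₁ 1 with hvdef
  have hv0 : v ≠ 0 := by
    intro h
    apply hb1
    have := congrFun h a₁
    simpa [hvdef, Matrix.mulVec_single] using this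
  have hvfix : (F z z) *ᵥ v = v := by
    rw [hvdef, Matrix.mulVec_mulVec, hmul]
  obtain ⟨a₀, ha0⟩ := Function.ne_iff.mp hv0
  have ha0 : v a₀ ≠ 0 := by simpa using ha0
  -- build R
  set R : Matrix (Fin n) (Fin n) ℝ := Matrix.of (fun a k => ((F k z) *ᵥ v) a) with hR
  -- left inverse
  set S : Matrix (Fin n) (Fin n) ℝ :=
    Matrix.of (fun m b => (v a₀)⁻¹ * (F z m) a₀ b) with hS
  have hSR : S * R = 1 := by
    ext m k
    rw [Matrix.mul_apply]
    have : ∀ b, S m b * R b k = (v a₀)⁻¹ * ((F z m) a₀ b * ((F k z) *ᵥ v) b) := by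
      intro b; rw [hS, hR]; simp [Matrix.of_apply]; ring
    rw [Finset.sum_congr rfl (fun b _ => this b), ← Finset.mul_sum]
    have hsum : ∑ b, (F z m) a₀ b * ((F k z) *ᵥ v) b = ((F z m * F k z) *ᵥ v) a₀ := by
      rw [← Matrix.mulVec_mulVec, Matrix.mulVec]
      rfl
    rw [hsum]
    by_cases hmk : m = k
    · subst hmk
      rw [hmul, hvfix, inv_mul_cancel₀ ha0, Matrix.one_apply_eq]
    · rw [hz z m k z hmk, Matrix.zero_mulVec]
      simp [Matrix.one_apply, hmk]
  have hRu : IsUnit R := (Matrix.isUnit_iff_isUnit_det R).mpr (Matrix.isUnit_det_of_left_inverse hSR)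
  refine ⟨R, hRu, fun i j => ?_⟩
  -- key intertwining relation
  have hkey : F i j * R = R * Matrix.single i j (1 : ℝ) := by
    ext a k
    rw [Matrix.mul_apply]
    have hsum : ∑ b, (F i j) a b * R b k = ((F i j * F k z) *ᵥ v) a := by
      rw [← Matrix.mulVec_mulVec, Matrix.mulVec]
      rfl
    rw [hsum]
    by_cases hjk : j = k
    · subst hjk
      rw [hmul]
      rw [Matrix.mul_single_apply_same, hR]
      simp [Matrix.of_apply]
    · rw [hz i j k z hjk, Matrix.zero_mulVec]
      simp [Ne.symm hjk]
  have hinv : R * R⁻¹ = 1 := Matrix.mul_nonsing_inv R ((Matrix.isUnit_iff_isUnit_det R).mp hRu)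
  calc F i j = F i j * (R * R⁻¹) := by rw [hinv, mul_one]
    _ = (F i j * R) * R⁻¹ := by rw [mul_assoc]
    _ = R * Matrix.single i j (1 : ℝ) * R⁻¹ := by rw [hkey]
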